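/- arXiv:1003.2179 — 3 statements merged into one kernel-verified Lean document; each statement's English description precedes it below -/
import Mathlib

section
/- Let μ(u) ∈ 1 + u⁻¹ℂ[[u⁻¹]]. Then μ(−u) ⇒ μ(u) if and only if there exists γ(u) ∈ 1 + u⁻²ℂ[[u⁻²]] (an even power series) such that γ(u)μ(u) = (1−a₁u⁻¹)(1−a₂u⁻¹)⋯(1−a_{2k}u⁻¹) for some complex numbers a₁,…,a_{2k} satisfying a_{2i−1} + a_{2i} ∈ ℤ_{≥0} for each i = 1,…,k. -/
open PowerSeries Polynomial

noncomputable section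

abbrev PS := PowerSeries ℂ

/-- `f ∈ 1 + u⁻¹ℂ[[u⁻¹]]`, with `X` playing the role of `u⁻¹`. -/
def One1 (f : PS) : Prop := PowerSeries.constantCoeff f = 1

/-- `f ∈ 1 + u⁻²ℂ[[u⁻²]]`: an even power series with constant term 1. -/
def EvenOne (f : PS) : Prop := One1 f ∧ ∀ n, Odd n → PowerSeries.coeff n f = 0

/-- `u^{-deg P}·P(u)` viewed as a power series in `X = u⁻¹`. -/
def lowerP (P : Polynomial ℂ) : PS := (P.reverse : PowerSeries ℂ)

/-- `f → g`: there is a monic `P` with `f/g = P(u+1)/P(u)`. -/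
def Arrow (f g : PS) : Prop :=
  ∃ P : Polynomial ℂ, P.Monic ∧ f * lowerP P = g * lowerP (P.comp (Polynomial.X + 1))

/-- `f ⇒ g`: there is a monic `P` of even degree with `P(u) = P(1−u)` and
`f/g = P(u+1)/P(u)`. -/
def DArrow (f g : PS) : Prop :=
  ∃ P : Polynomial ℂ, P.Monic ∧ Even P.natDegree ∧ P.comp (1 - Polynomial.X) = P ∧
    f * lowerP P = g * lowerP (P.comp (Polynomial.X + 1))

/-- `f(−u)`, i.e. `u⁻¹ ↦ −u⁻¹`. -/
def negU (f : PS) : PS := PowerSeries.rescale (-1) f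

/-- the factor `1 + a·u⁻¹`. -/
def linF (a : ℂ) : PS := 1 + PowerSeries.C a * PowerSeries.X

/-- `f` is a polynomial in `u⁻¹`. -/
def IsPolyPS (f : PS) : Prop := ∃ Q : Polynomial ℂ, (Q : PS) = f

/-- `z ∈ ℤ_{≥0}` (so `a ≥ b` iff `IsNonnegInt (a - b)`). -/
def IsNonnegInt (z : ℂ) : Prop := ∃ n : ℕ, z = n
-- basic lemmas
lemma lowerP_mul (P Q : Polynomial ℂ) : lowerP (P * Q) = lowerP P * lowerP Q := by
  unfold lowerP
  rw [Polynomial.reverse_mul_of_domain, Polynomial.coe_mul]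

lemma lowerP_prod {s : Finset ℕ} (f : ℕ → Polynomial ℂ) :
    lowerP (∏ i ∈ s, f i) = ∏ i ∈ s, lowerP (f i) := by
  classical
  induction s using Finset.induction with
  | empty =>
      rw [Finset.prod_empty, Finset.prod_empty, lowerP, ← Polynomial.C_1,
        Polynomial.reverse_C, Polynomial.coe_C, map_one]
  | insert _ _ h ih => rw [Finset.prod_insert h, Finset.prod_insert h, lowerP_mul, ih]

lemma reverse_X_sub_C (a : ℂ) : (Polynomial.X - Polynomial.C a).reverse
    = 1 - Polynomial.C a * Polynomial.X := by
  ext n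
  rw [Polynomial.coeff_reverse, Polynomial.natDegree_X_sub_C]
  match n with
  | 0 => simp
  | 1 => simp [Polynomial.coeff_one]
  | (n+2) => rw [Polynomial.revAt_eq_self_of_lt (by omega)]; simp [Polynomial.revAt, Function.Embedding.coeFn_mk, Polynomial.revAtFun,
      Polynomial.coeff_X, Polynomial.coeff_C, Polynomial.coeff_one]

lemma lowerP_X_sub_C (a : ℂ) : lowerP (Polynomial.X - Polynomial.C a) = linF (-a) := by
  rw [lowerP, reverse_X_sub_C, linF]
  push_cast
  rw [map_neg]
  ring

lemma lowerP_X_add_C (a : ℂ) : lowerP (Polynomial.X + Polynomial.C a) = linF a := by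
  have := lowerP_X_sub_C (-a)
  rw [map_neg, sub_neg_eq_add, neg_neg] at this
  exact this

lemma constantCoeff_linF (a : ℂ) : PowerSeries.constantCoeff (linF a) = 1 := by
  simp [linF]

lemma coeff_linF (a : ℂ) (n : ℕ) :
    PowerSeries.coeff n (linF a) = if n = 0 then 1 else if n = 1 then a else 0 := by
  match n with
  | 0 => simp [linF, PowerSeries.coeff_zero_eq_constantCoeff]
  | 1 => simp [linF]
  | (n+2) => simp [linF, PowerSeries.coeff_one, PowerSeries.coeff_C_mul, PowerSeries.coeff_X]

lemma negU_linF (a : ℂ) : negU (linF a) = linF (-a) := by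
  ext n
  rw [negU, PowerSeries.coeff_rescale, coeff_linF, coeff_linF]
  match n with
  | 0 => simp
  | 1 => simp
  | (n+2) => simp

lemma negU_mul (f g : PS) : negU (f * g) = negU f * negU g := map_mul _ f g

lemma constantCoeff_negU (f : PS) :
    PowerSeries.constantCoeff (negU f) = PowerSeries.constantCoeff f := by
  have : PowerSeries.coeff 0 (negU f) = PowerSeries.coeff 0 f := by
    rw [negU, PowerSeries.coeff_rescale]; simp
  simpa [PowerSeries.coeff_zero_eq_constantCoeff] using this

lemma evenOne_negU_eq {γ : PS} (h : EvenOne γ) : negU γ = γ := by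
  ext n
  rw [negU, PowerSeries.coeff_rescale]
  rcases Nat.even_or_odd n with he | ho
  · rw [he.neg_one_pow, one_mul]
  · rw [h.2 n ho, mul_zero]

lemma negU_eq_evenOne {γ : PS} (h0 : One1 γ) (h : negU γ = γ) : EvenOne γ := by
  refine ⟨h0, fun n hn => ?_⟩
  have := congrArg (PowerSeries.coeff n) h
  rw [negU, PowerSeries.coeff_rescale, hn.neg_one_pow, neg_one_mul] at this
  linear_combination (-1/2 : ℂ) * this

def Qpoly (a : ℂ) (n : ℕ) : Polynomial ℂ :=
  ∏ j ∈ Finset.range n, (Polynomial.X + Polynomial.C (a - 1 - j))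

lemma Qpoly_monic (a : ℂ) (n : ℕ) : (Qpoly a n).Monic :=
  Polynomial.monic_prod_of_monic _ _ (fun j _ => Polynomial.monic_X_add_C _)

lemma Qpoly_natDegree (a : ℂ) (n : ℕ) : (Qpoly a n).natDegree = n := by
  rw [Qpoly, Polynomial.natDegree_prod]
  · have h : ∀ i ∈ Finset.range n, (Polynomial.X + Polynomial.C (a - 1 - (i:ℂ))).natDegree = 1 :=
      fun i _ => Polynomial.natDegree_X_add_C _
    rw [Finset.sum_congr rfl h]
    simp
  · intro i _
    exact (Polynomial.monic_X_add_C _).ne_zero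

lemma Qpoly_shift (a : ℂ) (n : ℕ) :
    (Polynomial.X + Polynomial.C a) * Qpoly a n =
      (Polynomial.X - Polynomial.C ((n : ℂ) - a)) *
        (Qpoly a n).comp (Polynomial.X + 1) := by
  induction n with
  | zero =>
    simp only [Qpoly, Finset.range_zero, Finset.prod_empty, Polynomial.one_comp, mul_one]
    push_cast
    rw [zero_sub, map_neg, sub_neg_eq_add]
  | succ n ih =>
    have h1 : Qpoly a (n+1) = Qpoly a n * (Polynomial.X + Polynomial.C (a - 1 - n)) := by
      rw [Qpoly, Finset.prod_range_succ]; rfl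
    rw [h1, Polynomial.mul_comp, Polynomial.add_comp, Polynomial.X_comp, Polynomial.C_comp]
    have h2 : (Polynomial.X + 1 + Polynomial.C (a - 1 - (n:ℂ)))
        = Polynomial.X - Polynomial.C ((n:ℂ) - a) := by
      simp only [map_sub, map_add, map_one, map_natCast]
      ring
    have h3 : (Polynomial.X + Polynomial.C (a - 1 - (n:ℂ)))
        = Polynomial.X - Polynomial.C (((n:ℕ)+1 : ℂ) - a) := by
      simp only [map_sub, map_add, map_one, map_natCast]
      ring
    rw [h2]
    push_cast
    calc (Polynomial.X + Polynomial.C a) * (Qpoly a n * (Polynomial.X + Polynomial.C (a - 1 - n)))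
        = ((Polynomial.X + Polynomial.C a) * Qpoly a n) * (Polynomial.X + Polynomial.C (a - 1 - n)) := by ring
      _ = ((Polynomial.X - Polynomial.C ((n : ℂ) - a)) * (Qpoly a n).comp (Polynomial.X + 1))
            * (Polynomial.X + Polynomial.C (a - 1 - n)) := by rw [ih]
      _ = (Polynomial.X - Polynomial.C ((n:ℂ) + 1 - a)) *
            ((Qpoly a n).comp (Polynomial.X + 1) * (Polynomial.X - Polynomial.C ((n:ℂ) - a))) := by
          rw [h3]; push_cast; ring

lemma Qpoly_symm (a : ℂ) (n : ℕ) :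
    (Qpoly a n).comp (1 - Polynomial.X) = (-1)^n * Qpoly ((n:ℂ) - a) n := by
  induction n with
  | zero => simp [Qpoly]
  | succ n ih =>
    have h1 : Qpoly a (n+1) = Qpoly a n * (Polynomial.X + Polynomial.C (a - 1 - n)) := by
      rw [Qpoly, Finset.prod_range_succ]; rfl
    have h2 : Qpoly (((n:ℕ)+1:ℂ) - a) (n+1)
        = Qpoly ((n:ℂ) - a) n * (Polynomial.X + Polynomial.C ((n:ℂ) - a)) := by
      rw [Qpoly, Finset.prod_range_succ']
      congr 1
      · apply Finset.prod_congr rfl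
        intro j _
        congr 1
        push_cast
        ring
      · congr 1
        push_cast
        ring
    rw [h1, Polynomial.mul_comp, ih, Polynomial.add_comp, Polynomial.X_comp, Polynomial.C_comp]
    have h3 : (1 - Polynomial.X + Polynomial.C (a - 1 - (n:ℂ)))
        = -(Polynomial.X + Polynomial.C ((n:ℂ) - a)) := by
      simp only [map_sub, map_add, map_one, map_natCast]
      ring
    rw [h3]
    push_cast
    rw [h2]
    ring

lemma pair_shift (a : ℂ) (n : ℕ) :
    (Polynomial.X + Polynomial.C a) * (Polynomial.X + Polynomial.C ((n:ℂ) - a)) *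
        (Qpoly a n * Qpoly ((n:ℂ) - a) n) =
      (Polynomial.X - Polynomial.C a) * (Polynomial.X - Polynomial.C ((n:ℂ) - a)) *
        ((Qpoly a n * Qpoly ((n:ℂ) - a) n).comp (Polynomial.X + 1)) := by
  have hb := Qpoly_shift ((n:ℂ) - a) n
  have hn : (n:ℂ) - ((n:ℂ) - a) = a := by ring
  rw [hn] at hb
  have ha := Qpoly_shift a n
  rw [Polynomial.mul_comp]
  calc (Polynomial.X + Polynomial.C a) * (Polynomial.X + Polynomial.C ((n:ℂ) - a)) *
        (Qpoly a n * Qpoly ((n:ℂ) - a) n)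
      = ((Polynomial.X + Polynomial.C a) * Qpoly a n) *
        ((Polynomial.X + Polynomial.C ((n:ℂ) - a)) * Qpoly ((n:ℂ) - a) n) := by ring
    _ = ((Polynomial.X - Polynomial.C ((n:ℂ) - a)) * (Qpoly a n).comp (Polynomial.X + 1)) *
        ((Polynomial.X - Polynomial.C a) * (Qpoly ((n:ℂ) - a) n).comp (Polynomial.X + 1)) := by
        rw [ha, hb]
    _ = _ := by ring

lemma pair_symm (a : ℂ) (n : ℕ) :
    (Qpoly a n * Qpoly ((n:ℂ) - a) n).comp (1 - Polynomial.X)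
      = Qpoly a n * Qpoly ((n:ℂ) - a) n := by
  rw [Polynomial.mul_comp, Qpoly_symm, Qpoly_symm]
  have hn : (n:ℂ) - ((n:ℂ) - a) = a := by ring
  rw [hn]
  have : ((-1:Polynomial ℂ)^n) * ((-1:Polynomial ℂ)^n) = 1 := by
    rw [← mul_pow]
    simp
  calc ((-1)^n * Qpoly ((n:ℂ) - a) n) * ((-1)^n * Qpoly a n)
      = ((-1:Polynomial ℂ)^n * (-1:Polynomial ℂ)^n) * (Qpoly a n * Qpoly ((n:ℂ) - a) n) := by ring
    _ = Qpoly a n * Qpoly ((n:ℂ) - a) n := by rw [this, one_mul]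

lemma prod_range_two_mul {M : Type*} [CommMonoid M] (k : ℕ) (f : ℕ → M) :
    ∏ i ∈ Finset.range (2*k), f i = ∏ i ∈ Finset.range k, (f (2*i) * f (2*i+1)) := by
  induction k with
  | zero => simp
  | succ k ih =>
    have : 2*(k+1) = (2*k+1)+1 := by ring
    rw [this, Finset.prod_range_succ, Finset.prod_range_succ, Finset.prod_range_succ, ← ih,
      mul_assoc]

lemma pairing_lemma : ∀ (k : ℕ) (S : Multiset ℂ),
    S.map (fun x => 1 - x) = S → Multiset.card S = 2*k →
    ∃ a : ℕ → ℂ, S = (Multiset.range (2*k)).map a ∧ ∀ i < k, a (2*i+1) = 1 - a (2*i) := by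
  intro k
  induction k with
  | zero =>
    intro S _ hcard
    have h0 : S = 0 := Multiset.card_eq_zero.mp (by simpa using hcard)
    exact ⟨fun _ => 0, by simp [h0], by omega⟩
  | succ k ih =>
    intro S hsym hcard
    by_cases hex : ∃ x ∈ S, x ≠ (1/2 : ℂ)
    · obtain ⟨x, hxS, hx2⟩ := hex
      set y : ℂ := 1 - x with hy
      have hxy : y ≠ x := by
        intro h
        apply hx2
        rw [hy] at h
        linear_combination (-1/2 : ℂ) * h
      have hyS : y ∈ S := by
        rw [← hsym]
        exact Multiset.mem_map_of_mem _ hxS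
      have hyS' : y ∈ S.erase x := (Multiset.mem_erase_of_ne hxy).mpr hyS
      set T : Multiset ℂ := (S.erase x).erase y with hT
      have hS : S = x ::ₘ y ::ₘ T := by
        rw [hT, Multiset.cons_erase hyS', Multiset.cons_erase hxS]
      have hinj : Function.Injective (fun x : ℂ => 1 - x) := by
        intro u v h
        dsimp only at h
        linear_combination -h
      have hTsym : T.map (fun x => 1 - x) = T := by
        rw [hT, Multiset.map_erase _ hinj, Multiset.map_erase _ hinj, hsym]
        beta_reduce
        rw [show (1:ℂ) - y = x by rw [hy]; ring, ← hy, Multiset.erase_comm]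
      have hTcard : Multiset.card T = 2*k := by
        have := congrArg Multiset.card hS
        simp at this
        omega
      obtain ⟨a, haT, hpair⟩ := ih T hTsym hTcard
      set a' : ℕ → ℂ := fun i => if i = 2*k then x else if i = 2*k+1 then y else a i with ha'
      have ha'lt : ∀ i, i < 2*k → a' i = a i := by
        intro i hi
        rw [ha']
        beta_reduce
        rw [if_neg (by omega), if_neg (by omega)]
      have ha'x : a' (2*k) = x := by
        rw [ha']
        beta_reduce
        rw [if_pos rfl]
      have ha'y : a' (2*k+1) = y := by
        rw [ha']
        beta_reduce
        rw [if_neg (by omega), if_pos rfl]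
      refine ⟨a', ?_, ?_⟩
      · have h2 : 2*(k+1) = (2*k+1)+1 := by ring
        rw [h2, Multiset.range_succ, Multiset.range_succ, Multiset.map_cons, Multiset.map_cons,
          ha'x, ha'y]
        have hmc : Multiset.map a' (Multiset.range (2*k)) = Multiset.map a (Multiset.range (2*k)) := by
          apply Multiset.map_congr rfl
          intro i hi
          exact ha'lt i (Multiset.mem_range.mp hi)
        rw [hmc, ← haT, hS, Multiset.cons_swap]
      · intro i hi
        rcases Nat.lt_or_ge i k with h | h
        · rw [ha'lt _ (by omega), ha'lt _ (by omega)]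
          exact hpair i h
        · have hik : i = k := by omega
          subst hik
          rw [ha'x, ha'y]
    · push_neg at hex
      have hrep : S = Multiset.replicate (2*(k+1)) (1/2 : ℂ) := by
        rw [← hcard]
        exact Multiset.eq_replicate_card.mpr hex
      refine ⟨fun _ => (1/2 : ℂ), ?_, fun i _ => by norm_num⟩
      rw [hrep, Multiset.map_const']
      simp

lemma finset_prod_comp {s : Finset ℕ} (f : ℕ → Polynomial ℂ) (q : Polynomial ℂ) :
    (∏ i ∈ s, f i).comp q = ∏ i ∈ s, (f i).comp q := by
  classical
  induction s using Finset.induction with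
  | empty => simp
  | insert _ _ h ih =>
    rw [Finset.prod_insert h, Finset.prod_insert h, Polynomial.mul_comp, ih]

lemma multiset_prod_comp_one_sub (S : Multiset ℂ) :
    ((S.map fun r => Polynomial.X - Polynomial.C r).prod).comp (1 - Polynomial.X)
      = (-1)^(Multiset.card S) *
        ((S.map fun r => Polynomial.X - Polynomial.C (1 - r)).prod) := by
  induction S using Multiset.induction with
  | empty => simp
  | cons r S ih =>
    rw [Multiset.map_cons, Multiset.map_cons, Multiset.prod_cons, Multiset.prod_cons,
      Polynomial.mul_comp, ih, Multiset.card_cons]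
    have h : (Polynomial.X - Polynomial.C r).comp (1 - Polynomial.X)
        = -(Polynomial.X - Polynomial.C (1 - r)) := by
      simp only [Polynomial.sub_comp, Polynomial.X_comp, Polynomial.C_comp, map_sub, map_one]
      ring
    rw [h]
    ring

lemma X_sub_C_comp_X_add_one (c : ℂ) :
    (Polynomial.X - Polynomial.C c).comp (Polynomial.X + 1)
      = Polynomial.X - Polynomial.C (c - 1) := by
  simp only [Polynomial.sub_comp, Polynomial.X_comp, Polynomial.C_comp, map_sub, map_one]
  ring

lemma negU_prod {s : Finset ℕ} (f : ℕ → PS) : negU (∏ i ∈ s, f i) = ∏ i ∈ s, negU (f i) :=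
  map_prod (PowerSeries.rescale (-1)) f s

lemma constantCoeff_prod_linF {s : Finset ℕ} (g : ℕ → ℂ) :
    PowerSeries.constantCoeff (∏ i ∈ s, linF (g i)) = 1 := by
  rw [map_prod]
  exact Finset.prod_eq_one (fun i _ => constantCoeff_linF (g i))

lemma converse_dir (μ : PS) (k : ℕ) (a : ℕ → ℂ) (γ : PS) (hγ : EvenOne γ)
    (hint : ∀ i < k, IsNonnegInt (a (2*i) + a (2*i+1)))
    (hprod : γ * μ = ∏ i ∈ Finset.range (2*k), linF (-(a i))) : DArrow (negU μ) μ := by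
  classical
  -- choose the natural numbers n i
  have hchoice : ∀ i, ∃ m : ℕ, i < k → a (2*i) + a (2*i+1) = m := by
    intro i
    by_cases hi : i < k
    · obtain ⟨m, hm⟩ := hint i hi
      exact ⟨m, fun _ => hm⟩
    · exact ⟨0, fun h => absurd h hi⟩
  choose n hn using hchoice
  have hb : ∀ i, i < k → ((n i : ℂ) - a (2*i)) = a (2*i+1) := by
    intro i hi
    rw [← hn i hi]
    ring
  set P : Polynomial ℂ :=
    ∏ i ∈ Finset.range k, (Qpoly (a (2*i)) (n i) * Qpoly ((n i : ℂ) - a (2*i)) (n i)) with hP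
  have hmon : P.Monic :=
    Polynomial.monic_prod_of_monic _ _ (fun i _ => (Qpoly_monic _ _).mul (Qpoly_monic _ _))
  have heven : Even P.natDegree := by
    rw [hP, Polynomial.natDegree_prod]
    · refine ⟨∑ i ∈ Finset.range k, n i, ?_⟩
      rw [← Finset.sum_add_distrib]
      apply Finset.sum_congr rfl
      intro i _
      rw [(Qpoly_monic _ _).natDegree_mul (Qpoly_monic _ _), Qpoly_natDegree, Qpoly_natDegree]
    · exact fun i _ => ((Qpoly_monic _ _).mul (Qpoly_monic _ _)).ne_zero
  have hsymm : P.comp (1 - Polynomial.X) = P := by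
    rw [hP, finset_prod_comp]
    exact Finset.prod_congr rfl (fun i _ => pair_symm _ _)
  -- main polynomial identity
  set A : Polynomial ℂ := ∏ i ∈ Finset.range (2*k), (Polynomial.X + Polynomial.C (a i)) with hA
  set B : Polynomial ℂ := ∏ i ∈ Finset.range (2*k), (Polynomial.X - Polynomial.C (a i)) with hB
  have hkey : A * P = B * (P.comp (Polynomial.X + 1)) := by
    rw [hA, hB, hP, prod_range_two_mul, prod_range_two_mul, finset_prod_comp,
      ← Finset.prod_mul_distrib, ← Finset.prod_mul_distrib]
    apply Finset.prod_congr rfl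
    intro i hi
    rw [Finset.mem_range] at hi
    have := pair_shift (a (2*i)) (n i)
    rw [hb i hi] at this
    calc (Polynomial.X + Polynomial.C (a (2*i))) * (Polynomial.X + Polynomial.C (a (2*i+1))) *
          (Qpoly (a (2*i)) (n i) * Qpoly ((n i : ℂ) - a (2*i)) (n i))
        = (Polynomial.X - Polynomial.C (a (2*i))) * (Polynomial.X - Polynomial.C (a (2*i+1))) *
            ((Qpoly (a (2*i)) (n i) * Qpoly ((n i : ℂ) - a (2*i)) (n i)).comp
              (Polynomial.X + 1)) := by
          rw [← hb i hi] at this ⊢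
          exact this
      _ = _ := by rw [hb i hi]
  -- pass to power series
  have hlow : lowerP A * lowerP P = lowerP B * lowerP (P.comp (Polynomial.X + 1)) := by
    rw [← lowerP_mul, ← lowerP_mul, hkey]
  have hlowA : lowerP A = ∏ i ∈ Finset.range (2*k), linF (a i) := by
    rw [hA, lowerP_prod]
    exact Finset.prod_congr rfl (fun i _ => lowerP_X_add_C _)
  have hlowB : lowerP B = ∏ i ∈ Finset.range (2*k), linF (-(a i)) := by
    rw [hB, lowerP_prod]
    exact Finset.prod_congr rfl (fun i _ => lowerP_X_sub_C _)
  have hnegprod : γ * negU μ = ∏ i ∈ Finset.range (2*k), linF (a i) := by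
    have := congrArg negU hprod
    rw [negU_mul, evenOne_negU_eq hγ, negU_prod] at this
    rw [this]
    exact Finset.prod_congr rfl (fun i _ => by rw [negU_linF, neg_neg])
  have hγ0 : γ ≠ 0 := by
    intro h
    have := hγ.1
    rw [One1, h] at this
    simp at this
  refine ⟨P, hmon, heven, hsymm, ?_⟩
  apply mul_left_cancel₀ hγ0
  calc γ * (negU μ * lowerP P) = (γ * negU μ) * lowerP P := by ring
    _ = lowerP A * lowerP P := by rw [hnegprod, hlowA]
    _ = lowerP B * lowerP (P.comp (Polynomial.X + 1)) := hlow
    _ = (γ * μ) * lowerP (P.comp (Polynomial.X + 1)) := by rw [hlowB, hprod]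
    _ = γ * (μ * lowerP (P.comp (Polynomial.X + 1))) := by ring

lemma forward_dir (μ : PS) (hμ : One1 μ) (h : DArrow (negU μ) μ) :
    ∃ (k : ℕ) (a : ℕ → ℂ) (γ : PS), EvenOne γ ∧
      (∀ i < k, IsNonnegInt (a (2*i) + a (2*i+1))) ∧
      γ * μ = ∏ i ∈ Finset.range (2*k), linF (-(a i)) := by
  classical
  obtain ⟨P, hmon, heven, hsymP, heq⟩ := h
  obtain ⟨k, hk⟩ := heven
  have hsplits : P.Splits := IsAlgClosed.splits P
  set S : Multiset ℂ := P.roots with hSdef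
  have hcardS : Multiset.card S = P.natDegree := Polynomial.splits_iff_card_roots.mp hsplits
  have hProd : P = (S.map fun r => Polynomial.X - Polynomial.C r).prod :=
    hsplits.eq_prod_roots_of_monic hmon
  -- symmetry of the roots multiset
  have hSsym : S.map (fun x => (1:ℂ) - x) = S := by
    have h1 : P.comp (1 - Polynomial.X)
        = (-1)^(Multiset.card S) * ((S.map fun r => Polynomial.X - Polynomial.C (1 - r)).prod) := by
      rw [hProd] at hsymP ⊢
      rw [multiset_prod_comp_one_sub]
    have hsgn : ((-1 : Polynomial ℂ))^(Multiset.card S) = 1 := by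
      apply Even.neg_one_pow
      rw [hcardS, hk]
      exact ⟨k, rfl⟩
    rw [hsymP, hsgn, one_mul] at h1
    have h2 : P = (((S.map fun x => (1:ℂ) - x)).map fun r => Polynomial.X - Polynomial.C r).prod := by
      rw [Multiset.map_map]
      exact h1
    calc S.map (fun x => (1:ℂ) - x)
        = (((S.map fun x => (1:ℂ) - x)).map fun r => Polynomial.X - Polynomial.C r).prod.roots :=
          (Polynomial.roots_multiset_prod_X_sub_C _).symm
      _ = P.roots := by rw [← h2]
      _ = S := rfl
  have hcard2 : Multiset.card S = 2*k := by rw [hcardS, hk]; ring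
  obtain ⟨a, hSa, hpair⟩ := pairing_lemma k S hSsym hcard2
  -- P as a range product
  have hPprod : P = ∏ i ∈ Finset.range (2*k), (Polynomial.X - Polynomial.C (a i)) := by
    rw [hProd, hSa, Multiset.map_map]
    rw [Finset.prod_eq_multiset_prod, Finset.range_val]
    rfl
  have hlowP : lowerP P = ∏ i ∈ Finset.range (2*k), linF (-(a i)) := by
    rw [hPprod, lowerP_prod]
    exact Finset.prod_congr rfl (fun i _ => lowerP_X_sub_C _)
  have hlowP' : lowerP (P.comp (Polynomial.X + 1))
      = ∏ i ∈ Finset.range (2*k), linF (1 - a i) := by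
    rw [hPprod, finset_prod_comp, lowerP_prod]
    apply Finset.prod_congr rfl
    intro i _
    rw [X_sub_C_comp_X_add_one, lowerP_X_sub_C, neg_sub]
  -- the two products coincide after pairing
  have hGF : (∏ i ∈ Finset.range (2*k), linF (1 - a i))
      = ∏ i ∈ Finset.range (2*k), linF (a i) := by
    rw [prod_range_two_mul, prod_range_two_mul]
    apply Finset.prod_congr rfl
    intro i hi
    rw [Finset.mem_range] at hi
    have e1 : (1 : ℂ) - a (2*i) = a (2*i+1) := (hpair i hi).symm
    have e2 : (1 : ℂ) - a (2*i+1) = a (2*i) := by rw [hpair i hi]; ring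
    rw [e1, e2, mul_comm]
  -- rewrite the hypothesis
  rw [hlowP, hlowP'] at heq
  set F : PS := ∏ i ∈ Finset.range (2*k), linF (-(a i)) with hF
  -- define γ
  have hμ0 : PowerSeries.constantCoeff μ ≠ 0 := by rw [hμ]; exact one_ne_zero
  set γ : PS := F * μ⁻¹ with hγdef
  have hγμ : γ * μ = F := by
    rw [hγdef, mul_assoc, PowerSeries.inv_mul_cancel μ hμ0, mul_one]
  have hγ1 : One1 γ := by
    rw [One1, hγdef, map_mul, PowerSeries.constantCoeff_inv, hμ, hF, constantCoeff_prod_linF]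
    simp
  have hnegF : negU F = ∏ i ∈ Finset.range (2*k), linF (a i) := by
    rw [hF, negU_prod]
    exact Finset.prod_congr rfl (fun i _ => by rw [negU_linF, neg_neg])
  -- γ is even
  have hμne : μ ≠ 0 := fun h => hμ0 (by rw [h]; simp)
  have hnegμne : negU μ ≠ 0 := by
    intro h
    have := constantCoeff_negU μ
    rw [h, hμ] at this
    simp at this
  have hγeven : negU γ = γ := by
    apply mul_right_cancel₀ (mul_ne_zero hμne hnegμne)
    have hinv : negU μ⁻¹ * negU μ = 1 := by
      rw [← negU_mul, PowerSeries.inv_mul_cancel μ hμ0]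
      exact map_one _
    calc negU γ * (μ * negU μ)
        = negU F * (negU μ⁻¹ * negU μ) * μ := by rw [hγdef, negU_mul]; ring
      _ = negU F * μ := by rw [hinv, mul_one]
      _ = (∏ i ∈ Finset.range (2*k), linF (1 - a i)) * μ := by rw [hnegF, hGF]
      _ = negU μ * F := by linear_combination -heq
      _ = γ * (μ * negU μ) := by rw [← hγμ]; ring
  exact ⟨k, a, γ, negU_eq_evenOne hγ1 hγeven,
    fun i hi => ⟨1, by rw [hpair i hi]; push_cast; ring⟩, by rw [hγμ]⟩


/-- μ(−u) ⇒ μ(u) iff some even γ makes γ·μ a product (1−a₁u⁻¹)⋯(1−a_{2k}u⁻¹) with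
a_{2i−1} + a_{2i} ∈ ℤ_{≥0}. -/
theorem darrow_iff_paired_factorization (μ : PS) (hμ : One1 μ) :
    DArrow (negU μ) μ ↔
      ∃ (k : ℕ) (a : ℕ → ℂ) (γ : PS), EvenOne γ ∧
        (∀ i < k, IsNonnegInt (a (2*i) + a (2*i+1))) ∧
        γ * μ = ∏ i ∈ Finset.range (2*k), linF (-(a i)) := by
  constructor
  · exact fun h => forward_dir μ hμ h
  · rintro ⟨k, a, γ, hγ, hint, hprod⟩
    exact converse_dir μ k a γ hγ hint hprod
end
end

section
/- Let μ₁(u),…,μ_m(u) ∈ 1 + u⁻¹ℂ[[u⁻¹]]. If μ₁(−u) ⇒ μ₁(u) → μ₂(u) → ⋯ → μ_m(u), then there exists an even power series γ(u) ∈ 1 + u⁻²ℂ[[u⁻²]] such that γ(u)μ_i(u) is a polynomial in u⁻¹ for every i = 1,…,m. -/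
open PowerSeries Polynomial

noncomputable section

lemma negU_negU (f : PS) : negU (negU f) = f := by
  rw [negU, negU, rescale_rescale]
  norm_num

lemma odd_coeff_zero_of_negU_fixed {f : PS} (hf : negU f = f) :
    ∀ n, Odd n → PowerSeries.coeff n f = 0 := by
  intro n hn
  have := congrArg (PowerSeries.coeff n) hf
  rw [negU, PowerSeries.coeff_rescale, hn.neg_one_pow] at this
  have h2 : (2 : ℂ) * PowerSeries.coeff n f = 0 := by linear_combination -this
  simpa using h2

lemma coeff_comp_negX (P : Polynomial ℂ) (n : ℕ) :
    (P.comp (-Polynomial.X)).coeff n = (-1 : ℂ)^n * P.coeff n := by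
  induction P using Polynomial.induction_on' with
  | add p q hp hq => simp [Polynomial.add_comp, hp, hq, mul_add]
  | monomial k a =>
    have h1 : (Polynomial.monomial k a).comp (-Polynomial.X) =
        Polynomial.C a * (-Polynomial.X)^k := by
      rw [← Polynomial.C_mul_X_pow_eq_monomial]
      simp [Polynomial.mul_comp, Polynomial.pow_comp]
    have h2 : (-Polynomial.X : Polynomial ℂ)^k =
        Polynomial.C ((-1:ℂ)^k) * Polynomial.X^k := by
      rw [neg_pow]; simp
    rw [h1, h2, ← mul_assoc, ← Polynomial.C_mul]
    simp only [Polynomial.coeff_C_mul, Polynomial.coeff_X_pow, Polynomial.coeff_monomial]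
    by_cases h : n = k
    · subst h; simp [mul_comm]
    · simp [h, Ne.symm h]

lemma negU_coe (Q : Polynomial ℂ) :
    negU (Q : PS) = ((Q.comp (-Polynomial.X) : Polynomial ℂ) : PS) := by
  ext n
  rw [negU, PowerSeries.coeff_rescale, Polynomial.coeff_coe, Polynomial.coeff_coe,
    coeff_comp_negX]

lemma reverse_comp_negX {P : Polynomial ℂ} (heven : Even P.natDegree) :
    P.reverse.comp (-Polynomial.X) = (P.comp (-Polynomial.X)).reverse := by
  have hN : (P.comp (-Polynomial.X)).natDegree = P.natDegree := by
    rw [Polynomial.natDegree_comp, Polynomial.natDegree_neg, Polynomial.natDegree_X, mul_one]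
  ext n
  rw [coeff_comp_negX, Polynomial.coeff_reverse, Polynomial.coeff_reverse, hN]
  by_cases hn : n ≤ P.natDegree
  · rw [Polynomial.revAt_le hn, coeff_comp_negX]
    have hsq : ((-1:ℂ)^n) * ((-1)^n) = 1 := by
      rw [← pow_add]; exact Even.neg_one_pow ⟨n, rfl⟩
    have hkey : (-1:ℂ)^(P.natDegree - n) = (-1)^n := by
      have h1 : (-1:ℂ)^(P.natDegree - n) * (-1)^n = 1 := by
        rw [← pow_add, Nat.sub_add_cancel hn]; exact heven.neg_one_pow
      calc (-1:ℂ)^(P.natDegree - n)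
          = (-1)^(P.natDegree - n) * ((-1)^n * (-1)^n) := by rw [hsq, mul_one]
        _ = ((-1)^(P.natDegree - n) * (-1)^n) * (-1)^n := by ring
        _ = (-1)^n := by rw [h1, one_mul]
    rw [hkey]
  · push_neg at hn
    rw [Polynomial.revAt_eq_self_of_lt hn, coeff_comp_negX,
      Polynomial.coeff_eq_zero_of_natDegree_lt hn]

lemma comp_X_add_one_eq {P : Polynomial ℂ}
    (hsym : P.comp (1 - Polynomial.X) = P) :
    P.comp (Polynomial.X + 1) = P.comp (-Polynomial.X) := by
  conv_lhs => rw [← hsym]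
  rw [Polynomial.comp_assoc]
  congr 1
  simp [Polynomial.sub_comp]

lemma negU_lowerP {P : Polynomial ℂ} (heven : Even P.natDegree)
    (hsym : P.comp (1 - Polynomial.X) = P) :
    negU (lowerP P) = lowerP (P.comp (Polynomial.X + 1)) := by
  rw [lowerP, negU_coe, reverse_comp_negX heven, lowerP, comp_X_add_one_eq hsym]

lemma constantCoeff_lowerP (R : Polynomial ℂ) :
    PowerSeries.constantCoeff (lowerP R) = R.leadingCoeff := by
  rw [lowerP, ← PowerSeries.coeff_zero_eq_constantCoeff_apply, Polynomial.coeff_coe,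
    Polynomial.coeff_zero_reverse]

lemma monic_comp_add {R : Polynomial ℂ} (h : R.Monic) :
    (R.comp (Polynomial.X + 1)).Monic := by
  have := h.comp_X_add_C 1
  simpa using this

lemma isPolyPS_mul {f g : PS} (hf : IsPolyPS f) (hg : IsPolyPS g) : IsPolyPS (f * g) := by
  obtain ⟨Qf, rfl⟩ := hf
  obtain ⟨Qg, rfl⟩ := hg
  exact ⟨Qf * Qg, Polynomial.coe_mul _ _⟩

lemma isPolyPS_lowerP (R : Polynomial ℂ) : IsPolyPS (lowerP R) := ⟨R.reverse, rfl⟩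

lemma isPolyPS_negU {f : PS} (hf : IsPolyPS f) : IsPolyPS (negU f) := by
  obtain ⟨Q, rfl⟩ := hf
  rw [negU_coe]
  exact ⟨_, rfl⟩

lemma isPolyPS_prod (s : Finset ℕ) (g : ℕ → PS) (h : ∀ j ∈ s, IsPolyPS (g j)) :
    IsPolyPS (∏ j ∈ s, g j) := by
  classical
  induction s using Finset.induction_on with
  | empty => exact ⟨1, Polynomial.coe_one⟩
  | insert _ _ hnotmem ih =>
    rw [Finset.prod_insert hnotmem]
    exact isPolyPS_mul (h _ (Finset.mem_insert_self _ _))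
      (ih fun j hj => h j (Finset.mem_insert_of_mem hj))

/-- If μ₁(−u) ⇒ μ₁(u) → μ₂(u) → ⋯ → μ_m(u) then there is a common even γ with all
γ·μ_i polynomials in u⁻¹. -/
theorem chain_common_even_gamma (m : ℕ) (μ : ℕ → PS) (hm : 0 < m)
    (hone : ∀ i < m, One1 (μ i))
    (h0 : DArrow (negU (μ 0)) (μ 0))
    (hchain : ∀ i, i + 1 < m → Arrow (μ i) (μ (i + 1))) :
    ∃ γ : PS, EvenOne γ ∧ ∀ i < m, IsPolyPS (γ * μ i) := by
  classical
  obtain ⟨P, hPmon, hPeven, hPsym, hPeq⟩ := h0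
  -- extract the chain polynomials
  have hQex : ∀ j, ∃ Qj : Polynomial ℂ, (j + 1 < m → Qj.Monic ∧
      μ j * lowerP Qj = μ (j+1) * lowerP (Qj.comp (Polynomial.X + 1))) := by
    intro j
    by_cases h : j + 1 < m
    · obtain ⟨Qj, h1, h2⟩ := hchain j h
      exact ⟨Qj, fun _ => ⟨h1, h2⟩⟩
    · exact ⟨1, fun hc => absurd hc h⟩
  choose Q hQ using hQex
  -- the main recursion
  have hrel : ∀ i, i < m →
      μ 0 * ∏ j ∈ Finset.range i, lowerP (Q j)
        = μ i * ∏ j ∈ Finset.range i, lowerP ((Q j).comp (Polynomial.X + 1)) := by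
    intro i
    induction i with
    | zero => intro _; simp
    | succ i ih =>
      intro h
      rw [Finset.prod_range_succ, Finset.prod_range_succ]
      obtain ⟨hmon, heq⟩ := hQ i h
      have ihh := ih (Nat.lt_of_succ_lt h)
      linear_combination (lowerP (Q i)) * ihh +
        (∏ j ∈ Finset.range i, lowerP ((Q j).comp (Polynomial.X + 1))) * heq
  set D : PS := ∏ j ∈ Finset.range (m-1), lowerP ((Q j).comp (Polynomial.X + 1)) with hDdef
  set nD : PS := negU D with hnDdef
  set γ : PS := lowerP P * (μ 0)⁻¹ * (D * nD) with hγdef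
  have hμ0 : PowerSeries.constantCoeff (μ 0) = 1 := hone 0 hm
  have hι : μ 0 * (μ 0)⁻¹ = 1 :=
    PowerSeries.mul_inv_cancel _ (by rw [hμ0]; exact one_ne_zero)
  -- key symmetry facts
  have hkeyP : negU (lowerP P) = lowerP (P.comp (Polynomial.X + 1)) := negU_lowerP hPeven hPsym
  have hkeyP2 : negU (lowerP (P.comp (Polynomial.X + 1))) = lowerP P := by
    rw [← hkeyP, negU_negU]
  set g : PS := μ 0 * lowerP (P.comp (Polynomial.X + 1)) with hgdef
  have hg0 : PowerSeries.constantCoeff g = 1 := by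
    rw [hgdef, map_mul, hμ0, constantCoeff_lowerP, (monic_comp_add hPmon).leadingCoeff, one_mul]
  have hgfix : negU g = g := by
    calc negU g = negU (negU (μ 0) * lowerP P) := by rw [hPeq]
      _ = μ 0 * lowerP (P.comp (Polynomial.X + 1)) := by rw [negU_mul, negU_negU, hkeyP]
      _ = g := by rw [hgdef]
  set E : PS := lowerP P * lowerP (P.comp (Polynomial.X + 1)) * (D * nD) with hEdef
  have hEfix : negU E = E := by
    rw [hEdef, negU_mul, negU_mul, hkeyP, hkeyP2, negU_mul, hnDdef, negU_negU]
    ring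
  have hγg : γ * g = E := by
    rw [hγdef, hgdef, hEdef]
    linear_combination (lowerP P * lowerP (P.comp (Polynomial.X + 1)) * (D * nD)) * hι
  have hγfix : negU γ = γ := by
    have h1 : negU γ * g = γ * g := by
      calc negU γ * g = negU γ * negU g := by rw [hgfix]
        _ = negU (γ * g) := (negU_mul _ _).symm
        _ = negU E := by rw [hγg]
        _ = E := hEfix
        _ = γ * g := hγg.symm
    have hginv : g * g⁻¹ = 1 :=
      PowerSeries.mul_inv_cancel _ (by rw [hg0]; exact one_ne_zero)
    calc negU γ = negU γ * (g * g⁻¹) := by rw [hginv, mul_one]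
      _ = (negU γ * g) * g⁻¹ := by ring
      _ = (γ * g) * g⁻¹ := by rw [h1]
      _ = γ * (g * g⁻¹) := by ring
      _ = γ := by rw [hginv, mul_one]
  -- constant coefficient of γ
  have hDc : PowerSeries.constantCoeff D = 1 := by
    rw [hDdef, map_prod]
    apply Finset.prod_eq_one
    intro j hj
    have hj' : j + 1 < m := by
      have := Finset.mem_range.mp hj
      omega
    rw [constantCoeff_lowerP, (monic_comp_add (hQ j hj').1).leadingCoeff]
  have hγc : PowerSeries.constantCoeff γ = 1 := by
    rw [hγdef, map_mul, map_mul, map_mul, hnDdef, constantCoeff_negU, hDc,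
      constantCoeff_lowerP, hPmon.leadingCoeff, PowerSeries.constantCoeff_inv, hμ0]
    norm_num
  refine ⟨γ, ⟨hγc, odd_coeff_zero_of_negU_fixed hγfix⟩, ?_⟩
  -- polynomiality
  intro i hi
  have hsplit : D = (∏ j ∈ Finset.range i, lowerP ((Q j).comp (Polynomial.X + 1))) *
      (∏ j ∈ Finset.Ico i (m-1), lowerP ((Q j).comp (Polynomial.X + 1))) := by
    rw [hDdef, Finset.range_eq_Ico, Finset.range_eq_Ico]
    exact (Finset.prod_Ico_consecutive (fun j => lowerP ((Q j).comp (Polynomial.X + 1))) (Nat.zero_le i) (by omega : i ≤ m - 1)).symm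
  have h1 := hrel i hi
  have key : γ * μ i = lowerP P * nD *
      ((∏ j ∈ Finset.range i, lowerP (Q j)) *
        (∏ j ∈ Finset.Ico i (m-1), lowerP ((Q j).comp (Polynomial.X + 1)))) := by
    rw [hγdef, hsplit]
    linear_combination
      (-(lowerP P * (μ 0)⁻¹ * (∏ j ∈ Finset.Ico i (m-1),
          lowerP ((Q j).comp (Polynomial.X + 1))) * nD)) * h1 +
      (lowerP P * (∏ j ∈ Finset.Ico i (m-1), lowerP ((Q j).comp (Polynomial.X + 1))) * nD *
        (∏ j ∈ Finset.range i, lowerP (Q j))) * hι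
  rw [key]
  have hDpoly : IsPolyPS D := by
    rw [hDdef]; exact isPolyPS_prod _ _ fun j _ => isPolyPS_lowerP _
  have hnDpoly : IsPolyPS nD := by
    rw [hnDdef]; exact isPolyPS_negU hDpoly
  exact isPolyPS_mul (isPolyPS_mul (isPolyPS_lowerP _) hnDpoly)
    (isPolyPS_mul (isPolyPS_prod _ _ fun j _ => isPolyPS_lowerP _)
      (isPolyPS_prod _ _ fun j _ => isPolyPS_lowerP _))
end
end

section
/- Let (a₁,…,a_{2k+1}) be a list of complex numbers satisfying the ♯′-condition and a_{2i−1} + a_{2i} ∈ ℤ_{≥0} for i = 1,…,k. Let (b₁,…,b_{2k+1}) be any re-indexing (permutation) of the same list with b_{2i−1} + b_{2i} ∈ ℤ_{≥0} for i = 1,…,k. Then b_{2k+1} ≤ a_{2k+1}, i.e. a_{2k+1} − b_{2k+1} ∈ ℤ_{≥0}. In particular, the ♯′-special element is the unique maximal (in the partial order a ≥ b iff a−b ∈ ℤ_{≥0}) value of the last entry over all such pairings, and hence is unique. -/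
open PowerSeries Polynomial

noncomputable section

/-- The ♯′-condition on the list `a 0, …, a (2k)` (0-indexed): for each `i < k`,
whenever `{a p + a q : 2i ≤ p < q ≤ 2k} ∩ ℤ_{≥0}` is non-empty, `a (2i) + a (2i+1)`
is its minimal element for the order `x ≥ y ↔ x - y ∈ ℤ_{≥0}`. -/
def SharpCond (k : ℕ) (a : ℕ → ℂ) : Prop :=
  ∀ i < k,
    (∃ p q, 2*i ≤ p ∧ p < q ∧ q ≤ 2*k ∧ IsNonnegInt (a p + a q)) →
      IsNonnegInt (a (2*i) + a (2*i+1)) ∧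
      ∀ p q, 2*i ≤ p → p < q → q ≤ 2*k → IsNonnegInt (a p + a q) →
        IsNonnegInt (a p + a q - (a (2*i) + a (2*i+1)))

/-- `b` is a re-indexing (permutation) of the first `m` entries of `a`. -/
def PermOf (m : ℕ) (b a : ℕ → ℂ) : Prop :=
  ∃ σ : Equiv.Perm (Fin m), ∀ i : Fin m, b i = a (σ i)

/-- `x` is a ♯′-special element of the list `a 0, …, a (2k)`. -/
def IsSharpSpecial' (k : ℕ) (a : ℕ → ℂ) (x : ℂ) : Prop :=
  ∃ b : ℕ → ℂ, PermOf (2*k+1) b a ∧ SharpCond k b ∧ b (2*k) = x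

section Aux

open Multiset

lemma nni_add {x y : ℂ} (hx : IsNonnegInt x) (hy : IsNonnegInt y) :
    IsNonnegInt (x + y) := by
  obtain ⟨m, hm⟩ := hx; obtain ⟨n, hn⟩ := hy
  exact ⟨m + n, by push_cast [hm, hn]; ring⟩

def pairMs (p : ℂ × ℂ) : Multiset ℂ := {p.1, p.2}

def SBx (B : Multiset (ℂ × ℂ)) : Multiset ℂ := (B.map pairMs).sum

lemma SBx_cons (p : ℂ × ℂ) (B : Multiset (ℂ × ℂ)) :
    SBx (p ::ₘ B) = p.1 ::ₘ p.2 ::ₘ SBx B := by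
  simp [SBx, pairMs, Multiset.insert_eq_cons, Multiset.cons_add]

lemma mem_SBx {u : ℂ} {B : Multiset (ℂ × ℂ)} (h : u ∈ SBx B) :
    ∃ p ∈ B, u = p.1 ∨ u = p.2 := by
  induction B using Multiset.induction with
  | empty => simp [SBx] at h
  | cons q B ih =>
    rw [SBx_cons] at h
    rcases Multiset.mem_cons.1 h with h | h
    · exact ⟨q, Multiset.mem_cons_self _ _, Or.inl h⟩
    rcases Multiset.mem_cons.1 h with h | h
    · exact ⟨q, Multiset.mem_cons_self _ _, Or.inr h⟩
    · obtain ⟨p, hp, h⟩ := ih h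
      exact ⟨p, Multiset.mem_cons_of_mem hp, h⟩

lemma pick {u : ℂ} {B : Multiset (ℂ × ℂ)} (h : u ∈ SBx B) :
    ∃ p ∈ B, ∃ w, pairMs p = ({u, w} : Multiset ℂ) ∧ p.1 + p.2 = u + w := by
  obtain ⟨p, hp, h⟩ := mem_SBx h
  rcases h with h | h
  · exact ⟨p, hp, p.2, by simp [pairMs, h], by rw [h]⟩
  · exact ⟨p, hp, p.1, by simp only [pairMs, h]; exact Multiset.pair_comm _ _, by rw [h]; ring⟩

lemma SBx_erase {p : ℂ × ℂ} {B : Multiset (ℂ × ℂ)} (hp : p ∈ B) :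
    SBx B = p.1 ::ₘ p.2 ::ₘ SBx (B.erase p) := by
  conv_lhs => rw [← Multiset.cons_erase hp]
  rw [SBx_cons]

end Aux

lemma cons_cons_of_pair_eq {a b c d : ℂ} (h : ({a, b} : Multiset ℂ) = {c, d})
    (S : Multiset ℂ) : a ::ₘ b ::ₘ S = c ::ₘ d ::ₘ S := by
  have h2 := congrArg (· + S) h
  simpa [Multiset.insert_eq_cons, Multiset.cons_add, Multiset.singleton_add] using h2

section Exchange
open Multiset

def msOfMx (B : Multiset (ℂ × ℂ)) (l : ℂ) : Multiset ℂ := l ::ₘ SBx B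

lemma pair_le_msOfMx {p : ℂ × ℂ} {B : Multiset (ℂ × ℂ)} (hp : p ∈ B) (l : ℂ) :
    pairMs p ≤ msOfMx B l := by
  rw [msOfMx, SBx_erase hp]
  calc pairMs p = p.1 ::ₘ p.2 ::ₘ 0 := by simp [pairMs, Multiset.insert_eq_cons]
  _ ≤ p.1 ::ₘ p.2 ::ₘ SBx (B.erase p) := by
      exact Multiset.cons_le_cons _ (Multiset.cons_le_cons _ (Multiset.zero_le _))
  _ ≤ l ::ₘ p.1 ::ₘ p.2 ::ₘ SBx (B.erase p) := Multiset.le_cons_self _ _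

lemma exchange (B : Multiset (ℂ × ℂ)) (lb u v : ℂ) (N : Multiset ℂ)
    (heq : msOfMx B lb = u ::ₘ v ::ₘ N)
    (hB : ∀ p ∈ B, IsNonnegInt (p.1 + p.2))
    (hmin : ∀ x y : ℂ, ({x, y} : Multiset ℂ) ≤ msOfMx B lb → IsNonnegInt (x + y) →
      IsNonnegInt (x + y - (u + v))) :
    ∃ B' lb', Multiset.card B' + 1 = Multiset.card B ∧ msOfMx B' lb' = N ∧
      (∀ p ∈ B', IsNonnegInt (p.1 + p.2)) ∧ IsNonnegInt (lb' - lb) := by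
  by_cases hul : u = lb
  · -- u is the leftover
    subst hul
    have hS : SBx B = v ::ₘ N := (Multiset.cons_inj_right u).1 heq
    have hv : v ∈ SBx B := by rw [hS]; exact Multiset.mem_cons_self _ _
    obtain ⟨p, hp, w, hpw, hsum⟩ := pick hv
    have hSB : SBx B = v ::ₘ w ::ₘ SBx (B.erase p) := by
      rw [SBx_erase hp]
      exact cons_cons_of_pair_eq (by simpa [pairMs] using hpw) _
    have hN : N = w ::ₘ SBx (B.erase p) := by
      have := hS.symm.trans hSB
      exact (Multiset.cons_inj_right v).1 this
    refine ⟨B.erase p, w, ?_, ?_, ?_, ?_⟩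
    · have hc := Multiset.card_erase_of_mem hp
      have hpos : 0 < Multiset.card B := Multiset.card_pos_iff_exists_mem.2 ⟨p, hp⟩
      rw [Nat.pred_eq_sub_one] at hc
      omega
    · rw [msOfMx, hN]
    · exact fun q hq => hB q (Multiset.mem_of_mem_erase hq)
    · have h1 : IsNonnegInt (v + w) := by rw [← hsum]; exact hB p hp
      have h2 := hmin v w (by rw [← hpw]; exact pair_le_msOfMx hp _) h1
      have : v + w - (u + v) = w - u := by ring
      rwa [this] at h2
  · -- u lies in some pair p = {u, w}
    have hu : u ∈ SBx B := by
      have : u ∈ msOfMx B lb := by rw [heq]; exact Multiset.mem_cons_self _ _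
      rcases Multiset.mem_cons.1 this with h | h
      · exact absurd h hul
      · exact h
    obtain ⟨p, hp, w, hpw, hsum⟩ := pick hu
    have hSB : SBx B = u ::ₘ w ::ₘ SBx (B.erase p) := by
      rw [SBx_erase hp]
      exact cons_cons_of_pair_eq (by simpa [pairMs] using hpw) _
    have huw : IsNonnegInt (u + w) := by rw [← hsum]; exact hB p hp
    have huw_le : ({u, w} : Multiset ℂ) ≤ msOfMx B lb := by
      rw [← hpw]; exact pair_le_msOfMx hp lb
    have heq1 : lb ::ₘ w ::ₘ SBx (B.erase p) = v ::ₘ N := by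
      have h0 : msOfMx B lb = u ::ₘ lb ::ₘ w ::ₘ SBx (B.erase p) := by
        rw [msOfMx, hSB, Multiset.cons_swap]
      rw [h0] at heq
      exact (Multiset.cons_inj_right u).1 heq
    by_cases hvw : v = w
    · -- u, v in the same pair
      subst hvw
      have hN : N = lb ::ₘ SBx (B.erase p) := by
        rw [Multiset.cons_swap] at heq1
        exact ((Multiset.cons_inj_right v).1 heq1).symm
      refine ⟨B.erase p, lb, ?_, ?_, ?_, ⟨0, by simp⟩⟩
      · have hc := Multiset.card_erase_of_mem hp
        have hpos : 0 < Multiset.card B := Multiset.card_pos_iff_exists_mem.2 ⟨p, hp⟩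
        rw [Nat.pred_eq_sub_one] at hc
        omega
      · rw [msOfMx, hN]
      · exact fun q hq => hB q (Multiset.mem_of_mem_erase hq)
    · by_cases hvlb : v = lb
      · -- v is the leftover
        subst hvlb
        have hN : N = w ::ₘ SBx (B.erase p) := ((Multiset.cons_inj_right v).1 heq1).symm
        refine ⟨B.erase p, w, ?_, ?_, ?_, ?_⟩
        · have hc := Multiset.card_erase_of_mem hp
          have hpos : 0 < Multiset.card B := Multiset.card_pos_iff_exists_mem.2 ⟨p, hp⟩
          rw [Nat.pred_eq_sub_one] at hc
          omega
        · rw [msOfMx, hN]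
        · exact fun q hq => hB q (Multiset.mem_of_mem_erase hq)
        · have h2 := hmin u w huw_le huw
          have : u + w - (u + v) = w - v := by ring
          rwa [this] at h2
      · -- v lies in another pair q = {v, z}
        have hv : v ∈ SBx (B.erase p) := by
          have : v ∈ lb ::ₘ w ::ₘ SBx (B.erase p) := by
            rw [heq1]; exact Multiset.mem_cons_self _ _
          rcases Multiset.mem_cons.1 this with h | h
          · exact absurd h hvlb
          rcases Multiset.mem_cons.1 h with h | h
          · exact absurd h hvw
          · exact h
        obtain ⟨q, hq, z, hqz, hsumq⟩ := pick hv
        have hSB1 : SBx (B.erase p) = v ::ₘ z ::ₘ SBx ((B.erase p).erase q) := by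
          rw [SBx_erase hq]
          exact cons_cons_of_pair_eq (by simpa [pairMs] using hqz) _
        have hN : N = lb ::ₘ w ::ₘ z ::ₘ SBx ((B.erase p).erase q) := by
          have h0 : lb ::ₘ w ::ₘ SBx (B.erase p)
              = v ::ₘ lb ::ₘ w ::ₘ z ::ₘ SBx ((B.erase p).erase q) := by
            rw [hSB1, Multiset.cons_swap w v, Multiset.cons_swap lb v]
          rw [h0] at heq1
          exact ((Multiset.cons_inj_right v).1 heq1).symm
        refine ⟨(w, z) ::ₘ (B.erase p).erase q, lb, ?_, ?_, ?_, ⟨0, by simp⟩⟩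
        · have h1 := Multiset.card_erase_of_mem hp
          have h2 := Multiset.card_erase_of_mem hq
          have hpos : 0 < Multiset.card B := Multiset.card_pos_iff_exists_mem.2 ⟨p, hp⟩
          have hpos2 : 0 < Multiset.card (B.erase p) :=
            Multiset.card_pos_iff_exists_mem.2 ⟨q, hq⟩
          rw [Nat.pred_eq_sub_one] at h1 h2
          simp only [Multiset.card_cons]
          omega
        · simp only [msOfMx, SBx_cons, hN]
        · intro r hr
          rcases Multiset.mem_cons.1 hr with h | h
          · subst h
            have hvz : IsNonnegInt (v + z) := by
              rw [← hsumq]; exact hB q (Multiset.mem_of_mem_erase hq)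
            have h2 := hmin u w huw_le huw
            have := nni_add hvz h2
            have e : v + z + (u + w - (u + v)) = (w, z).1 + (w, z).2 := by simp; ring
            rwa [e] at this
          · exact hB r (Multiset.mem_of_mem_erase (Multiset.mem_of_mem_erase h))

end Exchange

section Core
open Multiset

def msOfx (A : List (ℂ × ℂ)) (l : ℂ) : Multiset ℂ := msOfMx (↑A) l

lemma msOfx_nil (l : ℂ) : msOfx [] l = {l} := by
  simp [msOfx, msOfMx, SBx]

lemma msOfx_cons (p : ℂ × ℂ) (A : List (ℂ × ℂ)) (l : ℂ) :
    msOfx (p :: A) l = p.1 ::ₘ p.2 ::ₘ msOfx A l := by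
  show msOfMx (p ::ₘ (↑A : Multiset (ℂ × ℂ))) l = _
  rw [msOfMx, SBx_cons, msOfx, msOfMx]
  rw [Multiset.cons_swap l p.1, Multiset.cons_swap l p.2]

def SCx : List (ℂ × ℂ) → ℂ → Prop
  | [], _ => True
  | p :: A, l => (∀ x y : ℂ, ({x, y} : Multiset ℂ) ≤ msOfx (p :: A) l → IsNonnegInt (x + y) →
      IsNonnegInt (x + y - (p.1 + p.2))) ∧ SCx A l

lemma core : ∀ (A : List (ℂ × ℂ)) (B : Multiset (ℂ × ℂ)) (la lb : ℂ),
    Multiset.card B = A.length → msOfx A la = msOfMx B lb → SCx A la →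
    (∀ p ∈ B, IsNonnegInt (p.1 + p.2)) →
    IsNonnegInt (la - lb)
  | [], B, la, lb, hcard, heq, _, _ => by
      have hB0 : B = 0 := Multiset.card_eq_zero.1 (by simpa using hcard)
      subst hB0
      have : ({la} : Multiset ℂ) = {lb} := by
        simpa [msOfx_nil, msOfMx, SBx] using heq
      have : la = lb := by
        have := Multiset.singleton_inj.1 this
        exact this
      exact ⟨0, by simp [this]⟩
  | p :: A, B, la, lb, hcard, heq, hsc, hB => by
      have heq' : msOfMx B lb = p.1 ::ₘ p.2 ::ₘ msOfx A la := by
        rw [← heq, msOfx_cons]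
      obtain ⟨B', lb', hcard', heqN, hB', hdiff⟩ :=
        exchange B lb p.1 p.2 (msOfx A la) heq' hB (by rw [← heq]; exact hsc.1)
      have ih := core A B' la lb'
        (by simp at hcard; omega)
        (heqN.symm) hsc.2 hB'
      have := nni_add ih hdiff
      have e : la - lb' + (lb' - lb) = la - lb := by ring
      rwa [e] at this

end Core

section Bridge
open Multiset

def pairsListx (k : ℕ) (a : ℕ → ℂ) : List (ℂ × ℂ) :=
  (List.range k).map (fun i => (a (2*i), a (2*i+1)))

lemma SBx_pairsList (k : ℕ) (a : ℕ → ℂ) :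
    SBx (↑(pairsListx k a)) = (Multiset.range (2*k)).map a := by
  induction k with
  | zero => simp [pairsListx, SBx]
  | succ k ih =>
    have hl : (↑(pairsListx (k+1) a) : Multiset (ℂ × ℂ))
        = (a (2*k), a (2*k+1)) ::ₘ ↑(pairsListx k a) := by
      rw [pairsListx, List.range_succ, List.map_append, ← Multiset.coe_add, add_comm]
      rfl
    rw [hl, SBx_cons, ih]
    have h2 : 2*(k+1) = (2*k+1)+1 := by ring
    rw [h2, Multiset.range_succ, Multiset.range_succ, Multiset.map_cons, Multiset.map_cons]
    rw [Multiset.cons_swap]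

lemma msOfx_pairsList (k : ℕ) (a : ℕ → ℂ) :
    msOfx (pairsListx k a) (a (2*k)) = (Multiset.range (2*k+1)).map a := by
  rw [msOfx, msOfMx, SBx_pairsList, Multiset.range_succ, Multiset.map_cons]

lemma two_mem_map {x y : ℂ} {s : Multiset ℕ} {f : ℕ → ℂ} (hs : s.Nodup)
    (h : ({x, y} : Multiset ℂ) ≤ s.map f) :
    ∃ p ∈ s, ∃ q ∈ s, p ≠ q ∧ x = f p ∧ y = f q := by
  have hx : x ∈ s.map f := Multiset.mem_of_le h (by simp)
  obtain ⟨p, hp, hfp⟩ := Multiset.mem_map.1 hx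
  have h2 : ({y} : Multiset ℂ) ≤ (s.map f).erase x := by
    have h3 := Multiset.erase_le_erase x h
    have h4 : ({x, y} : Multiset ℂ).erase x = {y} := by
      rw [Multiset.insert_eq_cons, Multiset.erase_cons_head]
    rwa [h4] at h3
  have hme : (s.map f).erase x = (s.erase p).map f := by
    conv_lhs => rw [← Multiset.cons_erase hp, Multiset.map_cons, hfp, Multiset.erase_cons_head]
  have hy : y ∈ (s.erase p).map f := Multiset.mem_of_le (hme ▸ h2) (by simp)
  obtain ⟨q, hq, hfq⟩ := Multiset.mem_map.1 hy
  refine ⟨p, hp, q, Multiset.mem_of_mem_erase hq, ?_, hfp.symm, hfq.symm⟩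
  intro hpq
  subst hpq
  exact hs.notMem_erase hq

lemma pair_le_range_map {x y : ℂ} {n : ℕ} {f : ℕ → ℂ}
    (h : ({x, y} : Multiset ℂ) ≤ (Multiset.range n).map f) :
    ∃ p q, p < q ∧ q < n ∧ x + y = f p + f q := by
  obtain ⟨p, hp, q, hq, hpq, hx, hy⟩ := two_mem_map (Multiset.nodup_range n) h
  rw [Multiset.mem_range] at hp hq
  rcases Nat.lt_or_ge p q with h' | h'
  · exact ⟨p, q, h', hq, by rw [hx, hy]⟩
  · have : q < p := by omega
    exact ⟨q, p, this, hp, by rw [hx, hy]; ring⟩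

end Bridge

section Main
open Multiset

abbrev SharpCondx : ℕ → (ℕ → ℂ) → Prop := SharpCond

lemma sharp_shift {k : ℕ} {a : ℕ → ℂ} (h : SharpCondx (k+1) a) :
    SharpCondx k (fun j => a (j+2)) := by
  intro i hik hex
  have hex' : ∃ p q, 2*(i+1) ≤ p ∧ p < q ∧ q ≤ 2*(k+1) ∧ IsNonnegInt (a p + a q) := by
    obtain ⟨p, q, h1, h2, h3, h4⟩ := hex
    exact ⟨p+2, q+2, by omega, by omega, by omega, h4⟩
  obtain ⟨hnn, hall⟩ := h (i+1) (by omega) hex'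
  have e1 : 2*i+2 = 2*(i+1) := by ring
  have e2 : 2*i+1+2 = 2*(i+1)+1 := by ring
  refine ⟨?_, ?_⟩
  · show IsNonnegInt (a (2*i+2) + a (2*i+1+2))
    rw [e1, e2]; exact hnn
  · intro p q hp hpq hq hnn'
    show IsNonnegInt (a (p+2) + a (q+2) - (a (2*i+2) + a (2*i+1+2)))
    rw [e1, e2]
    exact hall (p+2) (q+2) (by omega) (by omega) (by omega) hnn'

lemma sc_of_sharp : ∀ (k : ℕ) (a : ℕ → ℂ), SharpCondx k a →
    SCx (pairsListx k a) (a (2*k))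
  | 0, a, _ => trivial
  | (k+1), a, hcond => by
    have hl : pairsListx (k+1) a
        = (a 0, a 1) :: pairsListx k (fun j => a (j+2)) := by
      rw [pairsListx, List.range_succ_eq_map, List.map_cons, List.map_map]
      refine congrArg₂ List.cons (by norm_num) ?_
      rw [pairsListx]
      apply List.map_congr_left
      intro i _
      simp only [Function.comp_apply]
      refine congrArg₂ Prod.mk ?_ ?_ <;> exact congrArg a (by omega)
    rw [hl]
    constructor
    · -- head minimality
      intro x y hle hnn
      have hms : msOfx ((a 0, a 1) :: pairsListx k (fun j => a (j+2))) (a (2*(k+1)))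
          = (Multiset.range (2*(k+1)+1)).map a := by
        rw [← hl]
        exact msOfx_pairsList (k+1) a
      rw [hms] at hle
      obtain ⟨p, q, hpq, hq, hsum⟩ := pair_le_range_map hle
      obtain ⟨_, hall⟩ := hcond 0 (by omega)
        ⟨p, q, by omega, hpq, by omega, by rw [← hsum]; exact hnn⟩
      have := hall p q (by omega) hpq (by omega) (by rw [← hsum]; exact hnn)
      simp only [Nat.mul_zero, Nat.zero_add] at this
      rw [← hsum] at this
      exact this
    · -- tail
      have hthis := sc_of_sharp k (fun j => a (j+2)) (sharp_shift hcond)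
      have e2 : 2*k+2 = 2*(k+1) := by omega
      rw [← e2]
      exact hthis

end Main

section Perm
open Multiset

lemma range_map_eq_univ_map (m : ℕ) (f : ℕ → ℂ) :
    (Multiset.range m).map f = Finset.univ.val.map (fun i : Fin m => f i) := by
  rw [Fin.univ_val_map, List.ofFn_eq_map]
  show ((List.range m).map f : Multiset ℂ) = _
  rw [← List.map_coe_finRange_eq_range, List.map_map]
  rfl

lemma perm_map_range {m : ℕ} {b a : ℕ → ℂ} (σ : Equiv.Perm (Fin m))
    (h : ∀ i : Fin m, b i = a (σ i)) :
    (Multiset.range m).map b = (Multiset.range m).map a := by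
  rw [range_map_eq_univ_map, range_map_eq_univ_map]
  have h1 : Finset.univ.val.map (fun i : Fin m => b i)
      = Finset.univ.val.map (fun i : Fin m => a (σ i)) :=
    Multiset.map_congr rfl (fun i _ => h i)
  rw [h1]
  have h2 : Finset.univ.val.map (fun i : Fin m => a (σ i))
      = (Finset.univ.val.map σ).map (fun i : Fin m => a i) := by
    rw [Multiset.map_map]
    rfl
  rw [h2]
  have h3 : Finset.univ.val.map σ = Finset.univ.val := by
    have := Finset.map_univ_equiv σ
    have := congrArg Finset.val this
    rwa [Finset.map_val] at this
  rw [h3]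

end Perm

theorem sharp_special_maximal' (k : ℕ) (a b : ℕ → ℂ)
    (hcond : SharpCondx k a)
    (hpa : ∀ i < k, IsNonnegInt (a (2*i) + a (2*i+1)))
    (hperm : ∃ σ : Equiv.Perm (Fin (2*k+1)), ∀ i : Fin (2*k+1), b i = a (σ i))
    (hpb : ∀ i < k, IsNonnegInt (b (2*i) + b (2*i+1))) :
    IsNonnegInt (a (2*k) - b (2*k)) := by
  obtain ⟨σ, hσ⟩ := hperm
  have hpm : (Multiset.range (2*k+1)).map b = (Multiset.range (2*k+1)).map a :=
    perm_map_range σ hσ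
  apply core (pairsListx k a) (↑(pairsListx k b)) (a (2*k)) (b (2*k))
  · simp [pairsListx]
  · have h1 : msOfMx (↑(pairsListx k b)) (b (2*k)) = msOfx (pairsListx k b) (b (2*k)) := rfl
    rw [msOfx_pairsList, h1, msOfx_pairsList, hpm]
  · exact sc_of_sharp k a hcond
  · intro p hp
    obtain ⟨i, hi, hpi⟩ := List.mem_map.1 (Multiset.mem_coe.1 hp)
    rw [List.mem_range] at hi
    rw [← hpi]
    exact hpb i hi

/-- Maximality of the ♯′-special element: for any re-indexing b with nonnegative pair
sums, the last entry of b is ≤ that of the ♯′-indexing. -/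
theorem sharp_special_maximal (k : ℕ) (a b : ℕ → ℂ)
    (hcond : SharpCond k a)
    (hpa : ∀ i < k, IsNonnegInt (a (2*i) + a (2*i+1)))
    (hperm : PermOf (2*k+1) b a)
    (hpb : ∀ i < k, IsNonnegInt (b (2*i) + b (2*i+1))) :
    IsNonnegInt (a (2*k) - b (2*k)) :=
  sharp_special_maximal' k a b hcond hpa hperm hpb
end
end
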